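/- If h is strongly quasiconvex with modulus γ ≥ 0 on all of ℝⁿ, x̄ ∈ dom h, and the sublevel-set map y ↦ S_h(y) is inner semicontinuous at x̄ relative to dom h (i.e., S_h(x̄) ⊂ liminf_{y→x̄, y∈dom h} S_h(y)), then every limiting subgradient v ∈ ∂h(x̄) satisfies ⟨v, y − x̄⟩ ≤ −(γ/2)‖y − x̄‖² for all y ∈ S_h(x̄). -/
import Mathlib
set_option maxHeartbeats 800000

open RealInnerProductSpace Set Filter Topology

variable {E : Type*} [NormedAddCommGroup E] [InnerProductSpace ℝ E]

/-- The regular (Fréchet) subdifferential of `f` at `x`. -/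
def frechetSubdiff (f : E → EReal) (x : E) : Set E :=
  {v | ∀ ε > (0:ℝ), ∀ᶠ y in nhds x,
    f x + ((⟪v, y - x⟫ - ε * ‖y - x‖ : ℝ) : EReal) ≤ f y}

lemma frechet_step (h : E → EReal) (γ : ℝ) (hγ : 0 ≤ γ)
    (hsqc : ∀ x y : E, ∀ l ∈ Icc (0:ℝ) 1,
      h (l • y + (1 - l) • x) ≤
        max (h y) (h x) - ((l * (1 - l) * (γ / 2) * ‖x - y‖ ^ 2 : ℝ) : EReal))
    (x : E) (hxt : h x ≠ ⊤) (hxb : h x ≠ ⊥)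
    (v : E) (hv : v ∈ frechetSubdiff h x)
    (y : E) (hy : h y ≤ h x) :
    ⟪v, y - x⟫ ≤ -(γ / 2) * ‖y - x‖ ^ 2 := by
  set r := (h x).toReal with hrdef
  have hr : h x = (r : EReal) := (EReal.coe_toReal hxt hxb).symm
  set N := ‖y - x‖ with hNdef
  have hN0 : 0 ≤ N := norm_nonneg _
  have hC : (0:ℝ) < N + γ/2 * N^2 + 1 := by positivity
  apply le_of_forall_pos_le_add
  intro ε' hε'
  set C := N + γ/2 * N^2 + 1 with hCdef
  set ε := ε' / C with hεdef
  have hε : 0 < ε := div_pos hε' hC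
  obtain ⟨δ, hδ, hball⟩ := Metric.eventually_nhds_iff.mp (hv ε hε)
  set l := min ε (min 1 (δ / (N + 1))) with hldef
  have hl0 : 0 < l := lt_min hε (lt_min one_pos (div_pos hδ (by positivity)))
  have hl1 : l ≤ 1 := le_trans (min_le_right _ _) (min_le_left _ _)
  have hlε : l ≤ ε := min_le_left _ _
  have hld : l ≤ δ / (N + 1) := le_trans (min_le_right _ _) (min_le_right _ _)
  set z := l • y + (1 - l) • x with hzdef
  have hz : z - x = l • (y - x) := by
    rw [hzdef]; module
  have hnorm : ‖z - x‖ = l * N := by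
    rw [hz, norm_smul, Real.norm_eq_abs, abs_of_pos hl0]
  have hdist : dist z x < δ := by
    rw [dist_eq_norm, hnorm]
    have h1 : l * N ≤ δ / (N + 1) * N := mul_le_mul_of_nonneg_right hld hN0
    have h2 : δ / (N + 1) * N < δ := by
      rw [div_mul_eq_mul_div, div_lt_iff₀ (by positivity)]
      nlinarith
    linarith
  have hf := hball hdist
  have hq := hsqc x y l ⟨hl0.le, hl1⟩
  rw [max_eq_right hy] at hq
  have hchain : h x + ((⟪v, z - x⟫ - ε * ‖z - x‖ : ℝ) : EReal)
      ≤ h x - ((l * (1 - l) * (γ / 2) * ‖x - y‖ ^ 2 : ℝ) : EReal) := le_trans hf hq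
  rw [hr, ← EReal.coe_add, ← EReal.coe_sub, EReal.coe_le_coe_iff] at hchain
  have hinner : ⟪v, z - x⟫ = l * ⟪v, y - x⟫ := by
    rw [hz, real_inner_smul_right]
  have hnxy : ‖x - y‖ = N := by rw [hNdef, norm_sub_rev]
  rw [hinner, hnorm, hnxy] at hchain
  -- hchain : r + (l * ⟪v,y-x⟫ - ε * (l * N)) ≤ r - l*(1-l)*(γ/2)*N^2
  have key : ⟪v, y - x⟫ - ε * N ≤ -((1 - l) * (γ/2) * N^2) := by
    have h2 : l * (⟪v, y - x⟫ - ε * N) ≤ l * (-((1 - l) * (γ/2) * N^2)) := by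
      nlinarith [hchain]
    exact le_of_mul_le_mul_left h2 hl0
  have f1 : l * (γ/2 * N^2) ≤ ε * (γ/2 * N^2) :=
    mul_le_mul_of_nonneg_right hlε (by positivity)
  have f2 : ε * (N + γ/2 * N^2) ≤ ε * C :=
    mul_le_mul_of_nonneg_left (by rw [hCdef]; linarith) hε.le
  have hεC : ε * C = ε' := div_mul_cancel₀ _ (ne_of_gt hC)
  have e1 : -((1 - l) * (γ/2) * N^2) = l * (γ/2 * N^2) - γ/2 * N^2 := by ring
  have e2 : ε * (N + γ/2 * N^2) = ε * N + ε * (γ/2 * N^2) := by ring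
  clear_value N C ε l
  linarith [key, f1, f2, hεC]

/-- The limiting (Mordukhovich) subdifferential of `f` at `x`. -/
def limitingSubdiff (f : E → EReal) (x : E) : Set E :=
  {v | ∃ (xs vs : ℕ → E),
    Tendsto xs atTop (nhds x) ∧
    Tendsto (fun k => f (xs k)) atTop (nhds (f x)) ∧
    Tendsto vs atTop (nhds v) ∧
    ∀ k, vs k ∈ frechetSubdiff f (xs k)}

theorem limiting_subgradient_strong_sublevel_inequality
    (h : E → EReal) (hproper : ∀ x, h x ≠ ⊥)
    (γ : ℝ) (hγ : 0 ≤ γ)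
    (hsqc : ∀ x y : E, ∀ l ∈ Icc (0:ℝ) 1,
      h (l • y + (1 - l) • x) ≤
        max (h y) (h x) - ((l * (1 - l) * (γ / 2) * ‖x - y‖ ^ 2 : ℝ) : EReal))
    (xb : E) (hdom : h xb ≠ ⊤)
    (hisc : ∀ z : E, h z ≤ h xb → ∀ xs : ℕ → E,
      (∀ k, h (xs k) ≠ ⊤) → Tendsto xs atTop (nhds xb) →
      ∃ ys : ℕ → E, Tendsto ys atTop (nhds z) ∧ ∀ k, h (ys k) ≤ h (xs k)) :
    ∀ v ∈ limitingSubdiff h xb, ∀ y : E, h y ≤ h xb →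
      ⟪v, y - xb⟫ ≤ -(γ / 2) * ‖y - xb‖ ^ 2 := by
  intro v hv y hy
  obtain ⟨xs, vs, hxs, hhxs, hvs, hsub⟩ := hv
  set r := (h xb).toReal with hrdef
  have hrb : h xb = (r : EReal) := (EReal.coe_toReal hdom (hproper xb)).symm
  have hev : ∀ᶠ k in atTop, h (xs k) ≠ ⊤ := by
    have hmem : Ioo ((r - 1 : ℝ) : EReal) ((r + 1 : ℝ) : EReal) ∈ nhds (h xb) := by
      apply Ioo_mem_nhds <;> rw [hrb] <;> exact_mod_cast (by linarith : _)
    filter_upwards [hhxs.eventually hmem] with k hk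
    exact ne_top_of_lt (lt_of_lt_of_le hk.2 le_top)
  obtain ⟨M, hM⟩ := eventually_atTop.mp hev
  set xs' : ℕ → E := fun k => xs (k + M) with hxs'def
  set vs' : ℕ → E := fun k => vs (k + M) with hvs'def
  have hxs' : Tendsto xs' atTop (nhds xb) := hxs.comp (tendsto_add_atTop_nat M)
  have hvs' : Tendsto vs' atTop (nhds v) := hvs.comp (tendsto_add_atTop_nat M)
  have hfin : ∀ k, h (xs' k) ≠ ⊤ := fun k => hM _ (Nat.le_add_left M k)
  obtain ⟨ys, hys, hle⟩ := hisc y hy xs' hfin hxs'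
  have hk : ∀ k, ⟪vs' k, ys k - xs' k⟫ ≤ -(γ / 2) * ‖ys k - xs' k‖ ^ 2 := fun k =>
    frechet_step h γ hγ hsqc (xs' k) (hfin k) (hproper _) (vs' k) (hsub (k + M)) (ys k) (hle k)
  have L : Tendsto (fun k => ⟪vs' k, ys k - xs' k⟫) atTop (nhds ⟪v, y - xb⟫) :=
    hvs'.inner (hys.sub hxs')
  have R : Tendsto (fun k => -(γ / 2) * ‖ys k - xs' k‖ ^ 2) atTop
      (nhds (-(γ / 2) * ‖y - xb‖ ^ 2)) :=
    (((hys.sub hxs').norm).pow 2).const_mul _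
  exact le_of_tendsto_of_tendsto' L R hk
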